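/- arXiv:2211.12795 — 2 statements merged into one kernel-verified Lean document; each statement's English description precedes it below -/
import Mathlib

section
/- Let 𝒜 be an uncountable almost disjoint family of infinite subsets of ℕ and K_𝒜 the associated Mrówka space. Then the closed subspace of C_0(K_𝒜) spanned by the indicator functions {1_{{x_n}} : n ∈ ℕ} (which is isometric to c_0) is not the kernel of any bounded operator from C_0(K_𝒜) to ℓ_∞; in particular, it is not the kernel of any bounded operator on C_0(K_𝒜). -/
open Cardinal Set

/-- The underlying set of the Mrówka space associated with an almost disjoint family `𝒜`
of subsets of `ℕ`: the isolated points `x_n` are `Sum.inl n` and the points `y_A` are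
`Sum.inr A`. -/
def Mrowka (𝒜 : Set (Set ℕ)) : Type := ℕ ⊕ ↥𝒜

/-- The basic neighbourhood `U(A, F) = {x_n : n ∈ A \ F} ∪ {y_A}` of the point `y_A`. -/
def mrowkaNbhd {𝒜 : Set (Set ℕ)} (A : ↥𝒜) (F : Finset ℕ) : Set (Mrowka 𝒜) :=
  (Sum.inl '' ((A : Set ℕ) \ (F : Set ℕ))) ∪ {Sum.inr A}

/-- The Mrówka topology: points `x_n` are isolated and the sets `U(A, F)` form a
neighbourhood basis at `y_A`. -/
instance (𝒜 : Set (Set ℕ)) : TopologicalSpace (Mrowka 𝒜) :=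
  TopologicalSpace.generateFrom
    ({s | ∃ n : ℕ, s = {Sum.inl n}} ∪ {s | ∃ (A : ↥𝒜) (F : Finset ℕ), s = mrowkaNbhd A F})

/-- An almost disjoint family of infinite subsets of `ℕ`. -/
def ADFamily (𝒜 : Set (Set ℕ)) : Prop :=
  (∀ A ∈ 𝒜, A.Infinite) ∧ ∀ A ∈ 𝒜, ∀ B ∈ 𝒜, A ≠ B → (A ∩ B).Finite

open ZeroAtInfty

/-- The closed subspace of $C_0(K_𝒜)$ spanned by the indicator functions of the isolated
points $x_n$. -/
noncomputable def isolatedSpan (𝒜 : Set (Set ℕ)) : Submodule ℝ C₀(Mrowka 𝒜, ℝ) :=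
  (Submodule.span ℝ {f : C₀(Mrowka 𝒜, ℝ) |
    ∃ n : ℕ, ⇑f = Set.indicator {Sum.inl n} (1 : Mrowka 𝒜 → ℝ)}).topologicalClosure

namespace MrowkaAux

variable {𝒜 : Set (Set ℕ)}

/-- The isolated point `x_n` as an element of `Mrowka 𝒜`. -/
def xP (𝒜 : Set (Set ℕ)) (n : ℕ) : Mrowka 𝒜 := Sum.inl n

/-- The limit point `y_A` as an element of `Mrowka 𝒜`. -/
def yP {𝒜 : Set (Set ℕ)} (A : ↥𝒜) : Mrowka 𝒜 := Sum.inr A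

lemma mem_nbhd_inl {A : ↥𝒜} {F : Finset ℕ} {n : ℕ} :
    @Membership.mem (Mrowka 𝒜) (Set (Mrowka 𝒜)) _ (mrowkaNbhd A F) (Sum.inl n) ↔
      n ∈ (A : Set ℕ) \ (F : Set ℕ) := by
  unfold mrowkaNbhd
  constructor
  · rintro (⟨m, hm, h⟩ | h)
    · cases h; exact hm
    · cases h
  · intro h; exact Or.inl ⟨n, h, rfl⟩

lemma mem_nbhd_inr {A B : ↥𝒜} {F : Finset ℕ} :
    @Membership.mem (Mrowka 𝒜) (Set (Mrowka 𝒜)) _ (mrowkaNbhd A F) (Sum.inr B) ↔ B = A := by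
  unfold mrowkaNbhd
  constructor
  · rintro (⟨m, hm, h⟩ | h)
    · cases h
    · cases h; rfl
  · rintro rfl; exact Or.inr rfl

lemma mrowka_basis (𝒜 : Set (Set ℕ)) : TopologicalSpace.IsTopologicalBasis
    (({s | ∃ n : ℕ, s = {Sum.inl n}} ∪
      {s | ∃ (A : ↥𝒜) (F : Finset ℕ), s = mrowkaNbhd A F}) : Set (Set (Mrowka 𝒜))) := by
  constructor
  · rintro t₁ ht₁ t₂ ht₂ x ⟨hx₁, hx₂⟩
    obtain (n | B) := x
    · exact ⟨{Sum.inl n}, Or.inl ⟨n, rfl⟩, rfl,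
        fun z hz => ⟨by rwa [Set.mem_singleton_iff.mp hz], by rwa [Set.mem_singleton_iff.mp hz]⟩⟩
    · obtain (⟨n, rfl⟩ | ⟨A₁, F₁, rfl⟩) := ht₁
      · exact absurd hx₁ (by intro h; cases h)
      obtain (⟨n, rfl⟩ | ⟨A₂, F₂, rfl⟩) := ht₂
      · exact absurd hx₂ (by intro h; cases h)
      obtain rfl : B = A₁ := mem_nbhd_inr.mp hx₁
      obtain rfl : B = A₂ := mem_nbhd_inr.mp hx₂
      refine ⟨mrowkaNbhd B (F₁ ∪ F₂), Or.inr ⟨B, F₁ ∪ F₂, rfl⟩, mem_nbhd_inr.mpr rfl, ?_⟩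
      rintro (m | C) hz
      · rw [mem_nbhd_inl] at hz
        simp only [Finset.coe_union, Set.mem_diff, Set.mem_union, not_or] at hz
        exact ⟨mem_nbhd_inl.mpr ⟨hz.1, hz.2.1⟩, mem_nbhd_inl.mpr ⟨hz.1, hz.2.2⟩⟩
      · obtain rfl : C = B := mem_nbhd_inr.mp hz
        exact ⟨mem_nbhd_inr.mpr rfl, mem_nbhd_inr.mpr rfl⟩
  · apply Set.eq_univ_of_forall
    rintro (n | A)
    · exact ⟨{Sum.inl n}, Or.inl ⟨n, rfl⟩, rfl⟩
    · exact ⟨mrowkaNbhd A ∅, Or.inr ⟨A, ∅, rfl⟩, mem_nbhd_inr.mpr rfl⟩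
  · rfl

lemma isOpen_nbhd (A : ↥𝒜) (F : Finset ℕ) : IsOpen (mrowkaNbhd A F) :=
  (mrowka_basis 𝒜).isOpen (Or.inr ⟨A, F, rfl⟩)

lemma isOpen_inl (n : ℕ) : IsOpen ({Sum.inl n} : Set (Mrowka 𝒜)) :=
  (mrowka_basis 𝒜).isOpen (Or.inl ⟨n, rfl⟩)

lemma nbhd_mem_nhds_iff {A : ↥𝒜} {s : Set (Mrowka 𝒜)} :
    s ∈ nhds (yP A) ↔ ∃ F : Finset ℕ, mrowkaNbhd A F ⊆ s := by
  refine ((mrowka_basis 𝒜).mem_nhds_iff).trans ?_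
  constructor
  · rintro ⟨t, (⟨n, rfl⟩ | ⟨B, F, rfl⟩), hx, hts⟩
    · exact absurd hx (by intro h; cases h)
    · obtain rfl : A = B := mem_nbhd_inr.mp hx
      exact ⟨F, hts⟩
  · rintro ⟨F, hF⟩
    exact ⟨mrowkaNbhd A F, Or.inr ⟨A, F, rfl⟩, mem_nbhd_inr.mpr rfl, hF⟩

lemma isClosed_inl (n : ℕ) : IsClosed ({Sum.inl n} : Set (Mrowka 𝒜)) := by
  rw [← isOpen_compl_iff, (mrowka_basis 𝒜).isOpen_iff]
  rintro (m | B) hx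
  · refine ⟨{Sum.inl m}, Or.inl ⟨m, rfl⟩, rfl, ?_⟩
    rintro z rfl; exact hx
  · refine ⟨mrowkaNbhd B {n}, Or.inr ⟨B, {n}, rfl⟩, mem_nbhd_inr.mpr rfl, ?_⟩
    rintro (m | C) hz
    · rw [mem_nbhd_inl] at hz
      change ¬ (Sum.inl m : ℕ ⊕ ↥𝒜) = Sum.inl n
      intro h
      obtain rfl : m = n := by exact Sum.inl.inj h
      exact hz.2 (by simp)
    · intro h; cases h

lemma nbhd_disj (had : ADFamily 𝒜) {A B : ↥𝒜} (hAB : A ≠ B) (F : Finset ℕ) :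
    ∃ G : Finset ℕ, ∀ z ∈ mrowkaNbhd B G, z ∉ mrowkaNbhd A F := by
  have hfin : ((B : Set ℕ) ∩ (A : Set ℕ)).Finite :=
    had.2 B B.2 A A.2 (fun h => hAB (Subtype.coe_injective h).symm)
  refine ⟨hfin.toFinset, ?_⟩
  rintro (m | C) hz hz'
  · rw [mem_nbhd_inl] at hz hz'
    exact hz.2 (by simp [hfin.mem_toFinset]; exact ⟨hz.1, hz'.1⟩)
  · obtain rfl : C = B := mem_nbhd_inr.mp hz
    exact hAB (mem_nbhd_inr.mp hz').symm

lemma isClosed_nbhd (had : ADFamily 𝒜) (A : ↥𝒜) (F : Finset ℕ) :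
    IsClosed (mrowkaNbhd A F) := by
  rw [← isOpen_compl_iff, (mrowka_basis 𝒜).isOpen_iff]
  rintro (m | B) hx
  · exact ⟨{Sum.inl m}, Or.inl ⟨m, rfl⟩, rfl, by rintro z rfl; exact hx⟩
  · have hBA : B ≠ A := fun h => hx (h ▸ mem_nbhd_inr.mpr rfl)
    obtain ⟨G, hG⟩ := nbhd_disj had (fun h => hBA h.symm) F
    exact ⟨mrowkaNbhd B G, Or.inr ⟨B, G, rfl⟩, mem_nbhd_inr.mpr rfl, fun z hz => hG z hz⟩

lemma isCompact_nbhd (A : ↥𝒜) (F : Finset ℕ) : IsCompact (mrowkaNbhd A F) := by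
  rw [isCompact_iff_ultrafilter_le_nhds]
  intro f hf
  have hU : mrowkaNbhd A F ∈ f := Filter.le_principal_iff.mp hf
  by_cases hsing : ∃ n : ℕ, ({Sum.inl n} : Set (Mrowka 𝒜)) ∈ f
  · obtain ⟨n, hn⟩ := hsing
    have hmem : (Sum.inl n : Mrowka 𝒜) ∈ mrowkaNbhd A F := by
      rcases f.nonempty_of_mem (Filter.inter_mem hn hU) with ⟨z, hz1, hz2⟩
      rwa [Set.mem_singleton_iff.mp hz1] at hz2
    refine ⟨xP 𝒜 n, hmem, ?_⟩
    intro s hs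
    have : xP 𝒜 n ∈ s := mem_of_mem_nhds hs
    exact Filter.mem_of_superset hn (by rintro z rfl; exact this)
  · push_neg at hsing
    refine ⟨yP A, mem_nbhd_inr.mpr rfl, ?_⟩
    intro s hs
    obtain ⟨G, hG⟩ := nbhd_mem_nhds_iff.mp hs
    have hcompl : ∀ n ∈ G, ({Sum.inl n} : Set (Mrowka 𝒜))ᶜ ∈ f := fun n _ =>
      (Ultrafilter.compl_mem_iff_notMem).mpr (hsing n)
    have hint : (⋂ n ∈ G, ({Sum.inl n} : Set (Mrowka 𝒜))ᶜ) ∈ f :=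
      (Filter.biInter_finset_mem G).mpr hcompl
    refine Filter.mem_of_superset (Filter.inter_mem hU hint) ?_
    rintro (m | C) ⟨hz1, hz2⟩
    · rw [mem_nbhd_inl] at hz1
      have hmG : m ∉ G := fun hmG => (Set.mem_iInter₂.mp hz2 m hmG) rfl
      exact hG (mem_nbhd_inl.mpr ⟨hz1.1, by simpa using hmG⟩)
    · obtain rfl : C = A := mem_nbhd_inr.mp hz1
      exact hG (mem_nbhd_inr.mpr rfl)

open ZeroAtInfty in
/-- The indicator of a compact clopen set, as an element of `C₀`. -/
noncomputable def indC0 (U : Set (Mrowka 𝒜)) (hcl : IsClopen U) (hcp : IsCompact U) :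
    C₀(Mrowka 𝒜, ℝ) where
  toFun := U.indicator 1
  continuous_toFun := by
    have h1 : Continuous U.boolIndicator :=
      (continuous_boolIndicator_iff_isClopen U).mpr hcl
    have : U.indicator (1 : Mrowka 𝒜 → ℝ) =
        (fun b : Bool => if b then (1 : ℝ) else 0) ∘ U.boolIndicator := by
      funext x
      by_cases hx : x ∈ U <;> simp [hx, Set.indicator, Set.boolIndicator]
    rw [this]
    exact (continuous_of_discreteTopology).comp h1
  zero_at_infty' := by
    apply HasCompactSupport.is_zero_at_infty
    have hsub : tsupport (U.indicator (1 : Mrowka 𝒜 → ℝ)) ⊆ U :=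
      closure_minimal Set.support_indicator_subset hcl.isClosed
    exact hcp.of_isClosed_subset (isClosed_closure) hsub

@[simp] lemma indC0_apply (U : Set (Mrowka 𝒜)) (hcl hcp) (x : Mrowka 𝒜) :
    indC0 U hcl hcp x = U.indicator 1 x := rfl

/-- The indicator of `{x_n}` as an element of `C₀`. -/
noncomputable def eI (𝒜 : Set (Set ℕ)) (n : ℕ) : C₀(Mrowka 𝒜, ℝ) :=
  indC0 {Sum.inl n} ⟨isClosed_inl n, isOpen_inl n⟩ isCompact_singleton

/-- The indicator of `U(A, F)` as an element of `C₀`. -/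
noncomputable def gU (had : ADFamily 𝒜) (A : ↥𝒜) (F : Finset ℕ) : C₀(Mrowka 𝒜, ℝ) :=
  indC0 (mrowkaNbhd A F) ⟨isClosed_nbhd had A F, isOpen_nbhd A F⟩ (isCompact_nbhd A F)

/-- The generating set of `isolatedSpan`. -/
def genSet (𝒜 : Set (Set ℕ)) : Set C₀(Mrowka 𝒜, ℝ) :=
  {f : C₀(Mrowka 𝒜, ℝ) | ∃ n : ℕ, ⇑f = Set.indicator {Sum.inl n} (1 : Mrowka 𝒜 → ℝ)}

lemma eI_mem_genSet (n : ℕ) : eI 𝒜 n ∈ genSet 𝒜 := ⟨n, rfl⟩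

open Classical in
lemma gU_diff_mem_span (had : ADFamily 𝒜) (A : ↥𝒜) (F : Finset ℕ) :
    gU had A ∅ - gU had A F ∈ Submodule.span ℝ (genSet 𝒜) := by
  have key : gU had A ∅ - gU had A F = ∑ n ∈ F.filter (fun n => n ∈ (A : Set ℕ)), eI 𝒜 n := by
    ext x
    rw [ZeroAtInftyContinuousMap.coe_sub, Pi.sub_apply]
    have hsum : (∑ n ∈ F.filter (fun n => n ∈ (A : Set ℕ)), eI 𝒜 n) x
        = ∑ n ∈ F.filter (fun n => n ∈ (A : Set ℕ)), (eI 𝒜 n) x := by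
      induction (F.filter (fun n => n ∈ (A : Set ℕ))) using Finset.induction with
      | empty => simp [ZeroAtInftyContinuousMap.coe_zero]
      | insert _ _ h ih =>
        rw [Finset.sum_insert h, Finset.sum_insert h, ZeroAtInftyContinuousMap.coe_add]
        simp [ih]
    rw [hsum]
    show (mrowkaNbhd A ∅).indicator (1 : Mrowka 𝒜 → ℝ) x
        - (mrowkaNbhd A F).indicator (1 : Mrowka 𝒜 → ℝ) x
        = ∑ n ∈ F.filter (fun n => n ∈ (A : Set ℕ)),
            ({Sum.inl n} : Set (Mrowka 𝒜)).indicator (1 : Mrowka 𝒜 → ℝ) x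
    obtain (m | B) := x
    · by_cases hA : m ∈ (A : Set ℕ)
      · by_cases hF : m ∈ F
        · rw [Set.indicator_of_mem (mem_nbhd_inl.mpr ⟨hA, by simp⟩),
            Set.indicator_of_notMem (fun h => (mem_nbhd_inl.mp h).2 (by simpa using hF)),
            Finset.sum_eq_single_of_mem m (Finset.mem_filter.mpr ⟨hF, hA⟩)]
          · exact (sub_zero _).trans (Set.indicator_of_mem
              (s := ({Sum.inl m} : Set (Mrowka 𝒜))) (a := Sum.inl m) rfl _).symm
          · intro n _ hne
            exact Set.indicator_of_notMem
              (fun h => hne (Sum.inl.inj (Set.mem_singleton_iff.mp h)).symm) _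
        · rw [Set.indicator_of_mem (mem_nbhd_inl.mpr ⟨hA, by simp⟩),
            Set.indicator_of_mem (mem_nbhd_inl.mpr ⟨hA, by simpa using hF⟩),
            Finset.sum_eq_zero]
          · simp
          · intro n hn
            refine Set.indicator_of_notMem (fun h => ?_) _
            obtain rfl : m = n := Sum.inl.inj (Set.mem_singleton_iff.mp h)
            exact hF (Finset.mem_filter.mp hn).1
      · rw [Set.indicator_of_notMem (fun h => hA (mem_nbhd_inl.mp h).1),
          Set.indicator_of_notMem (fun h => hA (mem_nbhd_inl.mp h).1),
          Finset.sum_eq_zero]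
        · simp
        · intro n hn
          refine Set.indicator_of_notMem (fun h => ?_) _
          obtain rfl : m = n := Sum.inl.inj (Set.mem_singleton_iff.mp h)
          exact hA (Finset.mem_filter.mp hn).2
    · have hz : ∀ n ∈ F.filter (fun n => n ∈ (A : Set ℕ)),
          ({Sum.inl n} : Set (Mrowka 𝒜)).indicator (1 : Mrowka 𝒜 → ℝ) (Sum.inr B) = 0 :=
        fun n _ => Set.indicator_of_notMem
          (fun h => by cases h) _
      rw [Finset.sum_eq_zero hz]
      by_cases h : B = A
      · rw [Set.indicator_of_mem (mem_nbhd_inr.mpr h), Set.indicator_of_mem (mem_nbhd_inr.mpr h)]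
        simp
      · rw [Set.indicator_of_notMem (fun hm => h (mem_nbhd_inr.mp hm)),
          Set.indicator_of_notMem (fun hm => h (mem_nbhd_inr.mp hm))]
        simp
  rw [key]
  exact Submodule.sum_mem _ fun n _ => Submodule.subset_span (eI_mem_genSet n)

lemma eval_yP_eq_zero_of_mem_isolatedSpan {A : ↥𝒜} {f : C₀(Mrowka 𝒜, ℝ)}
    (hf : f ∈ isolatedSpan 𝒜) : f (yP A) = 0 := by
  have hev : Continuous (fun g : C₀(Mrowka 𝒜, ℝ) => g (yP A)) := by
    exact (continuous_eval_const (F := BoundedContinuousFunction (Mrowka 𝒜) ℝ) (yP A)).comp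
      (ZeroAtInftyContinuousMap.isometry_toBCF.continuous)
  have hclosed : IsClosed {g : C₀(Mrowka 𝒜, ℝ) | g (yP A) = 0} :=
    isClosed_eq hev continuous_const
  have hspan : ∀ g ∈ Submodule.span ℝ (genSet 𝒜), g ∈ {g : C₀(Mrowka 𝒜, ℝ) | g (yP A) = 0} := by
    intro g hg
    induction hg using Submodule.span_induction with
    | mem g hmem =>
      obtain ⟨n, hn⟩ := hmem
      show g (yP A) = 0
      rw [show g (yP A) = Set.indicator {Sum.inl n} (1 : Mrowka 𝒜 → ℝ) (yP A) from
        congrFun hn (yP A)]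
      exact Set.indicator_of_notMem (fun h => by cases h) _
    | zero => simp [Set.mem_setOf_eq, ZeroAtInftyContinuousMap.coe_zero]
    | add g h _ _ hg hh =>
      simp only [Set.mem_setOf_eq, ZeroAtInftyContinuousMap.coe_add, Pi.add_apply] at *
      rw [hg, hh]; ring
    | smul c g _ hg =>
      simp only [Set.mem_setOf_eq, ZeroAtInftyContinuousMap.coe_smul, Pi.smul_apply] at *
      rw [hg]; simp
  have : f ∈ closure (Submodule.span ℝ (genSet 𝒜) : Set C₀(Mrowka 𝒜, ℝ)) := by
    have := hf
    rwa [isolatedSpan, ← SetLike.mem_coe, Submodule.topologicalClosure_coe] at this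
  exact closure_minimal hspan hclosed this

lemma gU_not_mem_isolatedSpan (had : ADFamily 𝒜) (A : ↥𝒜) :
    gU had A ∅ ∉ isolatedSpan 𝒜 := by
  intro hmem
  have h0 : gU had A ∅ (yP A) = 0 := eval_yP_eq_zero_of_mem_isolatedSpan hmem
  have h1 : gU had A ∅ (yP A) = 1 := by
    show (mrowkaNbhd A ∅).indicator (1 : Mrowka 𝒜 → ℝ) (yP A) = 1
    exact (Set.indicator_of_mem (a := yP A) (s := mrowkaNbhd A ∅)
      (mem_nbhd_inr.mpr rfl) (1 : Mrowka 𝒜 → ℝ)).trans rfl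
  rw [h0] at h1
  norm_num at h1

lemma c0_sum_apply {ι : Type*} (s : Finset ι) (f : ι → C₀(Mrowka 𝒜, ℝ)) (x : Mrowka 𝒜) :
    (∑ i ∈ s, f i) x = ∑ i ∈ s, f i x := by
  classical
  induction s using Finset.induction with
  | empty => simp [ZeroAtInftyContinuousMap.coe_zero]
  | insert _ _ h ih =>
    rw [Finset.sum_insert h, Finset.sum_insert h, ZeroAtInftyContinuousMap.coe_add]
    simp [ih]

lemma c0_apply_le_norm (f : C₀(Mrowka 𝒜, ℝ)) (x : Mrowka 𝒜) : |f x| ≤ ‖f‖ := by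
  rw [← ZeroAtInftyContinuousMap.norm_toBCF_eq_norm]
  exact f.toBCF.norm_coe_le_norm x

lemma c0_norm_le {f : C₀(Mrowka 𝒜, ℝ)} {C : ℝ} (hC : 0 ≤ C) (h : ∀ x, |f x| ≤ C) :
    ‖f‖ ≤ C := by
  rw [← ZeroAtInftyContinuousMap.norm_toBCF_eq_norm]
  exact (BoundedContinuousFunction.norm_le hC).mpr fun x => h x

open Classical in
lemma finite_big (had : ADFamily 𝒜) (φ : C₀(Mrowka 𝒜, ℝ) →L[ℝ] ℝ)
    (hφ : ∀ f ∈ isolatedSpan 𝒜, φ f = 0) {ε : ℝ} (hε : 0 < ε) :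
    {A : ↥𝒜 | ε ≤ |φ (gU had A ∅)|}.Finite := by
  by_contra hfin
  rw [← Set.Infinite] at hfin
  obtain ⟨s, hs_sub, hs_card⟩ := hfin.exists_subset_card_eq (⌈‖φ‖ / ε⌉₊ + 1)
  -- the finite "forbidden" sets
  have hD : ∀ A : ↥𝒜, (⋃ B ∈ s.erase A, ((A : Set ℕ) ∩ (B : Set ℕ))).Finite := by
    intro A
    refine Set.Finite.biUnion (s.erase A).finite_toSet (fun B hB => ?_)
    refine had.2 A A.2 B B.2 (fun h => ?_)
    exact (Finset.mem_erase.mp hB).1 (Subtype.coe_injective h.symm)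
  set Fs : ↥𝒜 → Finset ℕ := fun A => (hD A).toFinset with hFs
  -- disjointness of the modified neighbourhoods
  have hdisj : ∀ A ∈ s, ∀ B ∈ s, A ≠ B → ∀ z : Mrowka 𝒜,
      z ∈ mrowkaNbhd A (Fs A) → z ∉ mrowkaNbhd B (Fs B) := by
    intro A hA B hB hAB z hz hz'
    obtain (m | C) := z
    · rw [mem_nbhd_inl] at hz hz'
      refine hz.2 ?_
      have : m ∈ (A : Set ℕ) ∩ (B : Set ℕ) := ⟨hz.1, hz'.1⟩
      have hBe : B ∈ s.erase A := Finset.mem_erase.mpr ⟨fun h => hAB h.symm, hB⟩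
      simp only [hFs, Set.Finite.coe_toFinset]
      exact Set.mem_biUnion hBe this
    · exact hAB ((mem_nbhd_inr.mp hz).symm.trans (mem_nbhd_inr.mp hz'))
  set sgn : ↥𝒜 → ℝ := fun A => if 0 ≤ φ (gU had A ∅) then 1 else -1 with hsgn
  have hsgn_abs : ∀ A, |sgn A| ≤ 1 := by
    intro A
    by_cases h : 0 ≤ φ (gU had A ∅) <;> simp [hsgn, h]
  set h' : C₀(Mrowka 𝒜, ℝ) := ∑ A ∈ s, sgn A • gU had A (Fs A) with hh'
  -- pointwise bound
  have hnorm : ‖h'‖ ≤ 1 := by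
    refine c0_norm_le zero_le_one fun x => ?_
    rw [hh', c0_sum_apply]
    have hterm : ∀ A : ↥𝒜, (sgn A • gU had A (Fs A)) x
        = sgn A * (mrowkaNbhd A (Fs A)).indicator (1 : Mrowka 𝒜 → ℝ) x := by
      intro A
      rw [ZeroAtInftyContinuousMap.coe_smul]
      rfl
    rw [Finset.sum_congr rfl (fun A _ => hterm A)]
    by_cases hex : ∃ A ∈ s, x ∈ mrowkaNbhd A (Fs A)
    · obtain ⟨A₀, hA₀, hxA₀⟩ := hex
      rw [Finset.sum_eq_single_of_mem A₀ hA₀ (fun B hB hne => ?_)]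
      · rw [Set.indicator_of_mem hxA₀]
        simpa using hsgn_abs A₀
      · rw [Set.indicator_of_notMem (hdisj A₀ hA₀ B hB (fun h => hne h.symm) x hxA₀)]
        ring
    · push_neg at hex
      rw [Finset.sum_eq_zero (fun A hA => ?_)]
      · norm_num
      · rw [Set.indicator_of_notMem (hex A hA)]
        ring
  -- the functional does not see the modification
  have hsame : ∀ A : ↥𝒜, φ (gU had A (Fs A)) = φ (gU had A ∅) := by
    intro A
    have hmem : gU had A ∅ - gU had A (Fs A) ∈ isolatedSpan 𝒜 :=
      Submodule.le_topologicalClosure _ (gU_diff_mem_span had A (Fs A))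
    have := hφ _ hmem
    rw [map_sub] at this
    linarith
  have hval : φ h' = ∑ A ∈ s, |φ (gU had A ∅)| := by
    rw [hh', map_sum]
    refine Finset.sum_congr rfl fun A _ => ?_
    rw [map_smul, smul_eq_mul, hsame]
    by_cases h : 0 ≤ φ (gU had A ∅)
    · rw [hsgn]; simp only [h, if_true, one_mul]; exact (abs_of_nonneg h).symm
    · rw [hsgn]; simp only [h, if_false, neg_one_mul]
      push_neg at h
      exact (abs_of_neg h).symm
  have hlower : (s.card : ℝ) * ε ≤ φ h' := by
    rw [hval]
    calc (s.card : ℝ) * ε = ∑ _A ∈ s, ε := by rw [Finset.sum_const, nsmul_eq_mul]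
    _ ≤ ∑ A ∈ s, |φ (gU had A ∅)| :=
        Finset.sum_le_sum fun A hA => hs_sub hA
  have hupper : φ h' ≤ ‖φ‖ := by
    calc φ h' ≤ |φ h'| := le_abs_self _
    _ ≤ ‖φ‖ * ‖h'‖ := φ.le_opNorm h'
    _ ≤ ‖φ‖ * 1 := by
        have := norm_nonneg φ
        nlinarith
    _ = ‖φ‖ := mul_one _
  have hcard : (s.card : ℝ) ≤ ‖φ‖ / ε := by
    rw [le_div_iff₀ hε]
    linarith
  rw [hs_card] at hcard
  have hceil : ‖φ‖ / ε ≤ (⌈‖φ‖ / ε⌉₊ : ℝ) := Nat.le_ceil _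
  push_cast at hcard
  linarith

lemma countable_bad (had : ADFamily 𝒜) (φ : C₀(Mrowka 𝒜, ℝ) →L[ℝ] ℝ)
    (hφ : ∀ f ∈ isolatedSpan 𝒜, φ f = 0) :
    {A : ↥𝒜 | φ (gU had A ∅) ≠ 0}.Countable := by
  have hsub : {A : ↥𝒜 | φ (gU had A ∅) ≠ 0}
      ⊆ ⋃ m : ℕ, {A : ↥𝒜 | 1 / (m + 1 : ℝ) ≤ |φ (gU had A ∅)|} := by
    intro A hA
    obtain ⟨m, hm⟩ := exists_nat_one_div_lt (abs_pos.mpr hA)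
    exact Set.mem_iUnion.mpr ⟨m, hm.le⟩
  refine Set.Countable.mono hsub ?_
  refine Set.countable_iUnion fun m => Set.Finite.countable ?_
  exact finite_big had φ hφ (by positivity)

/-- The `k`-th coordinate functional on `ℓ∞`. -/
noncomputable def coordFn (k : ℕ) : lp (fun _ : ℕ => ℝ) ⊤ →L[ℝ] ℝ :=
  LinearMap.mkContinuous
    { toFun := fun x => x k
      map_add' := fun x y => rfl
      map_smul' := fun c x => rfl }
    1 (fun x => by
      rw [one_mul]
      exact lp.norm_apply_le_norm ENNReal.top_ne_zero x k)

lemma part1 (had : ADFamily 𝒜) (hunc : ¬𝒜.Countable)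
    (T : C₀(Mrowka 𝒜, ℝ) →L[ℝ] lp (fun _ : ℕ => ℝ) ⊤) :
    LinearMap.ker (T : C₀(Mrowka 𝒜, ℝ) →ₗ[ℝ] lp (fun _ : ℕ => ℝ) ⊤) ≠ isolatedSpan 𝒜 := by
  intro hker
  have hφ : ∀ k : ℕ, ∀ f ∈ isolatedSpan 𝒜, ((coordFn k).comp T) f = 0 := by
    intro k f hf
    have hmem : f ∈ LinearMap.ker (T : C₀(Mrowka 𝒜, ℝ) →ₗ[ℝ] lp (fun _ : ℕ => ℝ) ⊤) := hker ▸ hf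
    have : T f = 0 := LinearMap.mem_ker.mp hmem
    rw [ContinuousLinearMap.comp_apply, this, map_zero]
  have hcnt : (⋃ k : ℕ, {A : ↥𝒜 | ((coordFn k).comp T) (gU had A ∅) ≠ 0}).Countable :=
    Set.countable_iUnion fun k => countable_bad had _ (hφ k)
  have huniv : ¬(Set.univ : Set ↥𝒜).Countable := by
    rw [Set.countable_univ_iff, Set.countable_coe_iff]
    exact hunc
  obtain ⟨A, hA⟩ : ∃ A : ↥𝒜,
      A ∉ ⋃ k : ℕ, {A : ↥𝒜 | ((coordFn k).comp T) (gU had A ∅) ≠ 0} := by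
    by_contra h
    push_neg at h
    exact huniv (hcnt.mono fun A _ => h A)
  have hAk : ∀ k : ℕ, ((coordFn k).comp T) (gU had A ∅) = 0 := by
    intro k
    by_contra hc
    exact hA (Set.mem_iUnion.mpr ⟨k, hc⟩)
  have hTz : T (gU had A ∅) = 0 := by
    apply lp.ext
    rw [lp.coeFn_zero]
    funext k
    exact hAk k
  have : gU had A ∅ ∈ isolatedSpan 𝒜 := hker ▸ LinearMap.mem_ker.mpr hTz
  exact gU_not_mem_isolatedSpan had A this

/-- Evaluation at the isolated points, as a map `C₀(K_𝒜) → ℓ∞`. -/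
noncomputable def J (𝒜 : Set (Set ℕ)) : C₀(Mrowka 𝒜, ℝ) →L[ℝ] lp (fun _ : ℕ => ℝ) ⊤ :=
  LinearMap.mkContinuous
    { toFun := fun f => ⟨fun k => f (xP 𝒜 k), memℓp_infty
        ⟨‖f‖, by rintro r ⟨k, rfl⟩; exact c0_apply_le_norm f (xP 𝒜 k)⟩⟩
      map_add' := fun f g => by
        apply lp.ext
        rw [lp.coeFn_add]
        funext k
        show (f + g) (xP 𝒜 k) = f (xP 𝒜 k) + g (xP 𝒜 k)
        rw [ZeroAtInftyContinuousMap.coe_add]; rfl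
      map_smul' := fun c f => by
        apply lp.ext
        rw [lp.coeFn_smul]
        funext k
        show (c • f) (xP 𝒜 k) = c • f (xP 𝒜 k)
        rw [ZeroAtInftyContinuousMap.coe_smul]; rfl }
    1 (fun f => by
      rw [one_mul, lp.norm_eq_ciSup]
      exact ciSup_le fun k => c0_apply_le_norm f (xP 𝒜 k))

lemma dense_inl (had : ADFamily 𝒜) : Dense (Set.range (xP 𝒜)) := by
  rw [(mrowka_basis 𝒜).dense_iff]
  rintro o (⟨n, rfl⟩ | ⟨A, F, rfl⟩) ho
  · exact ⟨Sum.inl n, rfl, ⟨n, rfl⟩⟩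
  · obtain ⟨n, hn⟩ := ((had.1 A A.2).diff F.finite_toSet).nonempty
    exact ⟨Sum.inl n, mem_nbhd_inl.mpr hn, ⟨n, rfl⟩⟩

lemma J_inj (had : ADFamily 𝒜) {f : C₀(Mrowka 𝒜, ℝ)} (h : J 𝒜 f = 0) : f = 0 := by
  have hk : ∀ k : ℕ, f (xP 𝒜 k) = 0 := by
    intro k
    exact congrFun (congrArg (fun x : lp (fun _ : ℕ => ℝ) ⊤ => (x : ℕ → ℝ)) h) k
  have heq : ⇑f = (0 : Mrowka 𝒜 → ℝ) := by
    refine Continuous.ext_on (dense_inl had) f.continuous continuous_const ?_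
    rintro x ⟨k, rfl⟩
    exact hk k
  ext x
  rw [heq]
  rfl

end MrowkaAux

theorem isolatedSpan_not_a_kernel (𝒜 : Set (Set ℕ)) (had : ADFamily 𝒜)
    (hunc : ¬𝒜.Countable) :
    (∀ T : C₀(Mrowka 𝒜, ℝ) →L[ℝ] lp (fun _ : ℕ => ℝ) ⊤,
      LinearMap.ker (T : C₀(Mrowka 𝒜, ℝ) →ₗ[ℝ] lp (fun _ : ℕ => ℝ) ⊤) ≠ isolatedSpan 𝒜) ∧
    ∀ S : C₀(Mrowka 𝒜, ℝ) →L[ℝ] C₀(Mrowka 𝒜, ℝ),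
      LinearMap.ker (S : C₀(Mrowka 𝒜, ℝ) →ₗ[ℝ] C₀(Mrowka 𝒜, ℝ)) ≠ isolatedSpan 𝒜 := by
  refine ⟨fun T => MrowkaAux.part1 had hunc T, fun S hker => ?_⟩
  have hkercomp : LinearMap.ker (((MrowkaAux.J 𝒜).comp S : C₀(Mrowka 𝒜, ℝ) →L[ℝ] lp (fun _ : ℕ => ℝ) ⊤) :
      C₀(Mrowka 𝒜, ℝ) →ₗ[ℝ] lp (fun _ : ℕ => ℝ) ⊤) =
      LinearMap.ker (S : C₀(Mrowka 𝒜, ℝ) →ₗ[ℝ] C₀(Mrowka 𝒜, ℝ)) := by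
    ext f
    simp only [LinearMap.mem_ker, ContinuousLinearMap.coe_comp', Function.comp_apply,
      ContinuousLinearMap.coe_coe]
    constructor
    · exact fun h => MrowkaAux.J_inj had h
    · intro h
      rw [h, map_zero]
  exact MrowkaAux.part1 had hunc ((MrowkaAux.J 𝒜).comp S) (hkercomp.trans hker)
end

section
/- Let W be a closed subspace of a Banach space X such that the quotient X/W is separable. Then there exists a bounded operator T : X → X with ker T = W. -/
noncomputable section

variable {X : Type*} [NormedAddCommGroup X] [NormedSpace ℝ X]

noncomputable def mkQL (S : Submodule ℝ X) : X →L[ℝ] X ⧸ S :=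
  S.mkQ.mkContinuous 1 fun x => by
    simpa using Submodule.Quotient.norm_mk_le S x

@[simp] lemma mkQL_apply (S : Submodule ℝ X) (x : X) :
    mkQL S x = Submodule.Quotient.mk x := rfl

lemma aux_exists_dual (F : Submodule ℝ X) [FiniteDimensional ℝ F] {y : X} (hy : y ∉ F) :
    ∃ f : X →L[ℝ] ℝ, f y = 1 ∧ ∀ x ∈ F, f x = 0 := by
  haveI : IsClosed (F : Set X) := F.closed_of_finiteDimensional
  have hq : (Submodule.Quotient.mk y : X ⧸ F) ≠ 0 := by
    simpa [Submodule.Quotient.mk_eq_zero] using hy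
  obtain ⟨g, hg1, hg2⟩ := exists_dual_vector ℝ (Submodule.Quotient.mk y : X ⧸ F) (norm_ne_zero_iff.mpr hq)
  have hc : ‖(Submodule.Quotient.mk y : X ⧸ F)‖ ≠ 0 := norm_ne_zero_iff.mpr hq
  refine ⟨‖(Submodule.Quotient.mk y : X ⧸ F)‖⁻¹ • (g.comp (mkQL F)), ?_, ?_⟩
  · simp [hg2, inv_mul_cancel₀ hc]
  · intro x hx
    have : (Submodule.Quotient.mk x : X ⧸ F) = 0 := (Submodule.Quotient.mk_eq_zero _).2 hx
    simp [this]

/-- Step: given finitely many (vector, functional) pairs in an infinite-dimensional space,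
we can find a new pair biorthogonal to them. -/
lemma aux_step (hX : ¬ FiniteDimensional ℝ X) (s : Finset (X × (X →L[ℝ] ℝ))) :
    ∃ q : X × (X →L[ℝ] ℝ), (‖q.1‖ = 1 ∧ q.2 q.1 = 1) ∧
      ∀ p ∈ s, p.2 q.1 = 0 ∧ q.2 p.1 = 0 := by
  classical
  set F : Submodule ℝ X := Submodule.span ℝ (↑(s.image Prod.fst) : Set X) with hF
  haveI : FiniteDimensional ℝ F := by infer_instance
  set Φ : X →ₗ[ℝ] (s → ℝ) := LinearMap.pi (fun p : s => ((p : X × (X →L[ℝ] ℝ)).2.toLinearMap))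
    with hΦ
  have h1 : ¬ (LinearMap.ker Φ ≤ F) := by
    intro hKF
    haveI : FiniteDimensional ℝ (LinearMap.ker Φ) := Submodule.finiteDimensional_of_le hKF
    haveI : FiniteDimensional ℝ (X ⧸ LinearMap.ker Φ) :=
      LinearEquiv.finiteDimensional Φ.quotKerEquivRange.symm
    apply hX
    have hrank := rank_quotient_add_rank_of_divisionRing (LinearMap.ker Φ)
    have : Module.rank ℝ X < Cardinal.aleph0 := by
      rw [← hrank]
      exact Cardinal.add_lt_aleph0 (Module.rank_lt_aleph0 ℝ _) (Module.rank_lt_aleph0 ℝ _)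
    exact Module.rank_lt_aleph0_iff.1 this
  obtain ⟨y0, hy0K, hy0F⟩ := SetLike.not_le_iff_exists.1 h1
  have hy0ne : y0 ≠ 0 := fun h => hy0F (h ▸ F.zero_mem)
  set y : X := ‖y0‖⁻¹ • y0 with hy
  have hyK : y ∈ LinearMap.ker Φ := Submodule.smul_mem _ _ hy0K
  have hyF : y ∉ F := by
    intro hmem
    apply hy0F
    have : (‖y0‖ : ℝ) • y = y0 := by
      rw [hy, smul_smul, mul_inv_cancel₀ (norm_ne_zero_iff.mpr hy0ne), one_smul]
    exact this ▸ F.smul_mem _ hmem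
  obtain ⟨f, hf1, hf0⟩ := aux_exists_dual F hyF
  refine ⟨(y, f), ⟨norm_smul_inv_norm hy0ne, hf1⟩, ?_⟩
  intro p hp
  constructor
  · have := LinearMap.mem_ker.1 hyK
    have := congrFun this ⟨p, hp⟩
    simpa [hΦ] using this
  · exact hf0 _ (Submodule.subset_span (by simp [Finset.mem_image]; exact ⟨p.2, hp⟩))

lemma aux_biorth (hX : ¬ FiniteDimensional ℝ X) :
    ∃ (x : ℕ → X) (f : ℕ → (X →L[ℝ] ℝ)), (∀ n, ‖x n‖ = 1) ∧ (∀ n, f n (x n) = 1) ∧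
      ∀ m n, m ≠ n → f m (x n) = 0 := by
  obtain ⟨q, hP, hr⟩ := exists_seq_of_forall_finset_exists
    (fun p : X × (X →L[ℝ] ℝ) => ‖p.1‖ = 1 ∧ p.2 p.1 = 1)
    (fun p q => p.2 q.1 = 0 ∧ q.2 p.1 = 0)
    (fun s _ => aux_step hX s)
  refine ⟨fun n => (q n).1, fun n => (q n).2, fun n => (hP n).1, fun n => (hP n).2, ?_⟩
  intro m n hmn
  rcases lt_or_gt_of_ne hmn with h | h
  · exact (hr m n h).1
  · exact (hr n m h).2

end

set_option maxHeartbeats 4000000 in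
set_option synthInstance.maxHeartbeats 400000 in
theorem exists_operator_with_kernel_of_separable_quotient {X : Type*}
    [NormedAddCommGroup X] [NormedSpace ℝ X] [CompleteSpace X]
    (W : Submodule ℝ X) (hW : IsClosed (W : Set X))
    (hsep : TopologicalSpace.SeparableSpace (X ⧸ W)) :
    ∃ T : X →L[ℝ] X, LinearMap.ker (T : X →ₗ[ℝ] X) = W := by
  haveI : IsClosed (W : Set X) := hW
  haveI := hsep
  by_cases hfin : FiniteDimensional ℝ (X ⧸ W)
  · -- finite-dimensional quotient: use a (automatically continuous) linear section
    obtain ⟨σ, hσ⟩ := W.mkQ.exists_rightInverse_of_surjective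
      (LinearMap.range_eq_top.2 W.mkQ_surjective)
    have hσinj : ∀ z, σ z = 0 → z = 0 := by
      intro z hz
      have : W.mkQ (σ z) = z := congrFun (congrArg DFunLike.coe hσ) z
      rw [hz, map_zero] at this
      exact this.symm
    refine ⟨(LinearMap.toContinuousLinearMap σ).comp (mkQL W), ?_⟩
    ext x
    simp only [LinearMap.mem_ker, ContinuousLinearMap.coe_comp', Function.comp_apply,
      LinearMap.coe_toContinuousLinearMap', mkQL_apply, ContinuousLinearMap.coe_coe]
    constructor
    · intro h
      have := hσinj _ h
      exact (Submodule.Quotient.mk_eq_zero _).1 this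
    · intro h
      rw [(Submodule.Quotient.mk_eq_zero _).2 h, map_zero]
  · -- infinite-dimensional separable quotient
    haveI hnt : Nontrivial (X ⧸ W) := by
      by_contra h
      rw [not_nontrivial_iff_subsingleton] at h
      exact hfin inferInstance
    have hXinf : ¬ FiniteDimensional ℝ X := by
      intro h
      exact hfin inferInstance
    obtain ⟨u, hu⟩ := TopologicalSpace.exists_dense_seq (X ⧸ W)
    choose g hg1 hg2 using fun n => exists_dual_vector' ℝ (u n)
    -- the functionals `g n` separate points
    have sep : ∀ z : X ⧸ W, (∀ n, g n z = 0) → z = 0 := by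
      intro z hz
      by_contra hz0
      have hzpos : 0 < ‖z‖ := norm_pos_iff.mpr hz0
      obtain ⟨n, hn⟩ := Metric.denseRange_iff.1 hu z (‖z‖ / 2) (by linarith)
      have h1 : ‖u n‖ ≤ ‖z‖ / 2 := by
        have : g n (u n) = g n (u n - z) := by rw [map_sub, hz n, sub_zero]
        calc ‖u n‖ = g n (u n) := (hg2 n).symm
          _ = g n (u n - z) := this
          _ ≤ ‖(g n) (u n - z)‖ := by rw [Real.norm_eq_abs]; exact le_abs_self _
          _ ≤ ‖g n‖ * ‖u n - z‖ := (g n).le_opNorm _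
          _ ≤ ‖u n - z‖ := by rw [hg1 n, one_mul]
          _ ≤ ‖z‖ / 2 := by rw [norm_sub_rev]; exact le_of_lt (by simpa [dist_eq_norm] using hn)
      have h2 : ‖z‖ / 2 < ‖u n‖ := by
        have : ‖z‖ - ‖u n‖ ≤ ‖z - u n‖ := norm_sub_norm_le _ _
        have hd : ‖z - u n‖ < ‖z‖ / 2 := by simpa [dist_eq_norm] using hn
        linarith
      linarith
    obtain ⟨x, f, hx1, hfx, hfx0⟩ := aux_biorth hXinf
    have hgeo : Summable (fun n => ((2:ℝ)⁻¹)^n) :=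
      summable_geometric_of_lt_one (by norm_num) (by norm_num)
    have hbnd : ∀ (z : X ⧸ W) (n : ℕ),
        ‖(g n) z • (((2:ℝ)⁻¹)^n • x n)‖ ≤ ((2:ℝ)⁻¹)^n * ‖z‖ := by
      intro z n
      have hb : ‖(g n) z‖ ≤ ‖z‖ := by
        calc ‖(g n) z‖ ≤ ‖g n‖ * ‖z‖ := (g n).le_opNorm _
          _ = ‖z‖ := by rw [hg1 n, one_mul]
      calc ‖(g n) z • (((2:ℝ)⁻¹)^n • x n)‖ = ‖(g n) z‖ * ((2:ℝ)⁻¹)^n := by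
            rw [norm_smul, norm_smul, hx1 n, mul_one, Real.norm_eq_abs (((2:ℝ)⁻¹)^n), abs_pow,
              abs_of_nonneg (by norm_num : (0:ℝ) ≤ 2⁻¹)]
        _ ≤ ‖z‖ * ((2:ℝ)⁻¹)^n :=
            mul_le_mul_of_nonneg_right hb (pow_nonneg (by norm_num) n)
        _ = ((2:ℝ)⁻¹)^n * ‖z‖ := mul_comm _ _
    have hwsum : ∀ z : X ⧸ W, Summable (fun n => (g n) z • (((2:ℝ)⁻¹)^n • x n)) := by
      intro z
      exact Summable.of_norm_bounded (hgeo.mul_right ‖z‖) (hbnd z)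
    set Slin : (X ⧸ W) →ₗ[ℝ] X :=
      { toFun := fun z => ∑' n, (g n) z • (((2:ℝ)⁻¹)^n • x n)
        map_add' := by
          intro z z'
          refine Eq.trans ?_ (Summable.tsum_add (hwsum z) (hwsum z'))
          exact tsum_congr fun n => by rw [map_add, add_smul]
        map_smul' := by
          intro c z
          simp only [RingHom.id_apply]
          refine Eq.trans ?_ (Summable.tsum_const_smul c (hwsum z))
          exact tsum_congr fun n => by rw [map_smul, smul_eq_mul, mul_smul] } with hSlin
    have hSbound : ∀ z, ‖Slin z‖ ≤ 2 * ‖z‖ := by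
      intro z
      have hsum2 : HasSum (fun n => ((2:ℝ)⁻¹)^n * ‖z‖) (2 * ‖z‖) := by
        have := (hasSum_geometric_of_lt_one (by norm_num : (0:ℝ) ≤ 2⁻¹)
          (by norm_num : (2:ℝ)⁻¹ < 1)).mul_right ‖z‖
        norm_num at this
        simpa only [one_div] using this
      exact tsum_of_norm_bounded hsum2 (hbnd z)
    set S : (X ⧸ W) →L[ℝ] X := Slin.mkContinuous 2 hSbound with hS
    have hSapp : ∀ z, S z = ∑' n, (g n) z • (((2:ℝ)⁻¹)^n • x n) := fun z => rfl
    have hinj : ∀ z, S z = 0 → z = 0 := by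
      intro z hz
      apply sep
      intro k
      have h0 : (0:ℝ) = ∑' n, f k ((g n) z • (((2:ℝ)⁻¹)^n • x n)) := by
        rw [← (f k).map_tsum (hwsum z), ← hSapp z, hz, map_zero]
      have h1 : ∑' n, f k ((g n) z • (((2:ℝ)⁻¹)^n • x n))
          = f k ((g k) z • (((2:ℝ)⁻¹)^k • x k)) := by
        apply tsum_eq_single
        intro n hn
        simp [hfx0 k n (Ne.symm hn)]
      have h2 : f k ((g k) z • (((2:ℝ)⁻¹)^k • x k)) = (g k) z * ((2:ℝ)⁻¹)^k := by
        simp [hfx k]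
      rw [h1, h2] at h0
      have hpow : ((2:ℝ)⁻¹)^k ≠ 0 := pow_ne_zero _ (by norm_num)
      rcases mul_eq_zero.1 h0.symm with h | h
      · exact h
      · exact absurd h hpow
    refine ⟨S.comp (mkQL W), ?_⟩
    ext x'
    simp only [LinearMap.mem_ker, ContinuousLinearMap.coe_comp', Function.comp_apply, mkQL_apply,
      ContinuousLinearMap.coe_coe]
    constructor
    · intro h
      exact (Submodule.Quotient.mk_eq_zero _).1 (hinj _ h)
    · intro h
      rw [(Submodule.Quotient.mk_eq_zero _).2 h, map_zero]
end
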